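/- arXiv:1905.13320 — 2 statements merged into one kernel-verified Lean document; each statement's English description precedes it below -/
import Mathlib

section
/- In a deterministic MDP with reward function uniformly Lipschitz in A with constant K, using a multi-step model {T̂_h : h ∈ [1,H]}, and assuming the policy assigns the same action probabilities at predicted and true h-step states, the absolute difference between the true H-step value E[V_H^π(s_1)] and the approximate value is at most K · Σ_{h=1}^{H−1} E[ ‖T_h(s_1, a_1..h) − T̂_h(s_1, a_1..h)‖ ]. -/
open Finset

/-- Executing a list of actions from a state with the true deterministic one-step dynamics:
`runModel T s ⟨a_1,...,a_h⟩` is the true `h`-step outcome `T_h(s, a_{1:h})`. -/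
def runModel {S A : Type*} (T : S → A → S) : S → List A → S
  | s, [] => s
  | s, a :: l => runModel T (T s a) l

/-- Probability, under policy `π` and true dynamics `T`, of executing the action list from `s`. -/
def seqProb {S A : Type*} (T : S → A → S) (π : S → A → ℝ) : S → List A → ℝ
  | _, [] => 1
  | s, a :: l => π s a * seqProb T π (T s a) l

section Aux
set_option linter.unusedSectionVars false
variable {S A : Type*} [Fintype A] (T : S → A → S) (π : S → A → ℝ)
lemma seqProb_nonneg (hπ : ∀ s a, 0 ≤ π s a) : ∀ (l : List A) (s : S), 0 ≤ seqProb T π s l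
  | [], s => by simp [seqProb]
  | a :: l, s => mul_nonneg (hπ s a) (seqProb_nonneg hπ l (T s a))
lemma sum_fn_succ (n : ℕ) (f : (Fin (n+1) → A) → ℝ) :
    ∑ v : Fin (n+1) → A, f v = ∑ a : A, ∑ w : Fin n → A, f (Fin.cons a w) := by
  rw [← (Fin.consEquiv fun _ => A).sum_comp f, Fintype.sum_prod_type]
  rfl
lemma ofFn_cons (n : ℕ) (a : A) (w : Fin n → A) :
    List.ofFn (Fin.cons a w : Fin (n+1) → A) = a :: List.ofFn w := by
  simp [List.ofFn_succ]
lemma sum_seqProb (hπ_sum : ∀ s, ∑ a : A, π s a = 1) :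
    ∀ (n : ℕ) (s : S), ∑ v : Fin n → A, seqProb T π s (List.ofFn v) = 1
  | 0, s => by simp [seqProb]
  | n+1, s => by
      rw [sum_fn_succ]
      simp only [ofFn_cons, seqProb, ← Finset.mul_sum]
      simp [sum_seqProb hπ_sum n, hπ_sum s]
lemma prod_pi_eq_seqProb :
    ∀ (n : ℕ) (s : S) (v : Fin n → A),
    ∏ i : Fin n, π (runModel T s ((List.ofFn v).take i)) (v i) = seqProb T π s (List.ofFn v)
  | 0, s, v => by simp [seqProb]
  | n+1, s, v => by
      rw [Fin.prod_univ_succ]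
      rw [List.ofFn_succ, seqProb]
      simp only [Fin.val_zero, List.take_zero, Fin.val_succ, List.take_succ_cons]
      show π (runModel T s []) (v 0) * _ = _
      have : ∀ i : Fin n, runModel T s (v 0 :: (List.ofFn (fun i => v i.succ)).take i.val)
          = runModel T (T s (v 0)) ((List.ofFn (fun i => v i.succ)).take i.val) := fun i => rfl
      simp only [this, runModel]
      rw [prod_pi_eq_seqProb n (T s (v 0)) (fun i => v i.succ)]
lemma sum_take (hπ_sum : ∀ s, ∑ a : A, π s a = 1) :
    ∀ (h : ℕ) (n : ℕ), h ≤ n → ∀ (s : S) (g : List A → ℝ),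
    ∑ v : Fin n → A, seqProb T π s (List.ofFn v) * g ((List.ofFn v).take h)
      = ∑ w : Fin h → A, seqProb T π s (List.ofFn w) * g (List.ofFn w)
  | 0, n, _, s, g => by
      simp only [List.take_zero]
      rw [← Finset.sum_mul, sum_seqProb T π hπ_sum]
      simp [seqProb]
  | h+1, 0, hn, s, g => by omega
  | h+1, n+1, hn, s, g => by
      rw [sum_fn_succ, sum_fn_succ]
      refine Finset.sum_congr rfl fun a _ => ?_
      simp only [ofFn_cons, seqProb, List.take_succ_cons, mul_assoc, ← Finset.mul_sum]
      rw [sum_take hπ_sum h n (by omega) (T s a) (fun l => g (a :: l))]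
end Aux

/-- Value-error bound for the multi-step model (Theorem 2): with a multi-step model
`M h s (a_{1:h}) ≈ T_h(s, a_{1:h})`, assuming the policy assigns the same action
probabilities at predicted and true `h`-step states, the value error is at most
`K · Σ_{h=1}^{H−1} E[‖T_h(s₁,a_{1:h}) − M h s₁ a_{1:h}‖]`. -/
theorem value_error_multi_step {S A : Type*} [NormedAddCommGroup S] [NormedSpace ℝ S]
    [Fintype A] (T : S → A → S) (M : ℕ → S → List A → S)
    (R : S → A → ℝ) (π : S → A → ℝ) (K : NNReal)
    (hR : ∀ a : A, LipschitzWith K (fun s => R s a))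
    (hπ_nonneg : ∀ s a, 0 ≤ π s a) (hπ_sum : ∀ s, ∑ a : A, π s a = 1)
    (H : ℕ) (s₁ : S)
    (hM0 : ∀ s : S, M 0 s [] = s)
    (hπ_eq : ∀ l : List A, π (runModel T s₁ l) = π (M l.length s₁ l)) :
    |(∑ v : Fin H → A,
        (∏ h : Fin H, π (runModel T s₁ ((List.ofFn v).take h)) (v h)) *
          ∑ h : Fin H, R (runModel T s₁ ((List.ofFn v).take h)) (v h)) -
      (∑ v : Fin H → A,
        (∏ h : Fin H, π (M h s₁ ((List.ofFn v).take h)) (v h)) *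
          ∑ h : Fin H, R (M h s₁ ((List.ofFn v).take h)) (v h))| ≤
    (K : ℝ) * ∑ h ∈ Finset.Ico 1 H, ∑ v : Fin h → A,
        seqProb T π s₁ (List.ofFn v) *
          ‖runModel T s₁ (List.ofFn v) - M h s₁ (List.ofFn v)‖ := by
  have hprod : ∀ v : Fin H → A,
      (∏ h : Fin H, π (M h s₁ ((List.ofFn v).take h.val)) (v h))
        = seqProb T π s₁ (List.ofFn v) := by
    intro v
    rw [← prod_pi_eq_seqProb T π H s₁ v]
    refine Finset.prod_congr rfl fun h _ => ?_
    have hlen : ((List.ofFn v).take (h : ℕ)).length = (h : ℕ) := by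
      simp [List.length_take, Nat.min_eq_left (le_of_lt h.isLt)]
    have := hπ_eq ((List.ofFn v).take (h : ℕ))
    rw [hlen] at this
    rw [← this]
  simp only [hprod, prod_pi_eq_seqProb T π H s₁]
  rw [← Finset.sum_sub_distrib]
  simp only [← mul_sub, ← Finset.sum_sub_distrib]
  have Pnn : ∀ v : Fin H → A, 0 ≤ seqProb T π s₁ (List.ofFn v) :=
    fun v => seqProb_nonneg T π hπ_nonneg _ _
  calc |∑ v : Fin H → A, seqProb T π s₁ (List.ofFn v) *
          ∑ h : Fin H, (R (runModel T s₁ ((List.ofFn v).take h.val)) (v h)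
            - R (M h.val s₁ ((List.ofFn v).take h.val)) (v h))|
      ≤ ∑ v : Fin H → A, |seqProb T π s₁ (List.ofFn v) *
          ∑ h : Fin H, (R (runModel T s₁ ((List.ofFn v).take h.val)) (v h)
            - R (M h.val s₁ ((List.ofFn v).take h.val)) (v h))| :=
        Finset.abs_sum_le_sum_abs _ _
    _ ≤ ∑ v : Fin H → A, seqProb T π s₁ (List.ofFn v) *
          ∑ h : Fin H, (K : ℝ) *
            ‖runModel T s₁ ((List.ofFn v).take h.val) - M h.val s₁ ((List.ofFn v).take h.val)‖ := by
        refine Finset.sum_le_sum fun v _ => ?_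
        rw [abs_mul, abs_of_nonneg (Pnn v)]
        refine mul_le_mul_of_nonneg_left ?_ (Pnn v)
        refine (Finset.abs_sum_le_sum_abs _ _).trans (Finset.sum_le_sum fun h _ => ?_)
        have := (hR (v h)).dist_le_mul (runModel T s₁ ((List.ofFn v).take h.val))
          (M h.val s₁ ((List.ofFn v).take h.val))
        rwa [Real.dist_eq, dist_eq_norm] at this
    _ = (K : ℝ) * ∑ h : Fin H, ∑ v : Fin H → A, seqProb T π s₁ (List.ofFn v) *
            ‖runModel T s₁ ((List.ofFn v).take h.val) - M h.val s₁ ((List.ofFn v).take h.val)‖ := by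
        simp only [Finset.mul_sum]
        rw [Finset.sum_comm]
        exact Finset.sum_congr rfl fun h _ => Finset.sum_congr rfl fun v _ => by ring
    _ = (K : ℝ) * ∑ h ∈ Finset.Ico 1 H, ∑ v : Fin h → A,
          seqProb T π s₁ (List.ofFn v) *
            ‖runModel T s₁ (List.ofFn v) - M h s₁ (List.ofFn v)‖ := by
        congr 1
        have hsum : ∀ h : Fin H, (∑ v : Fin H → A, seqProb T π s₁ (List.ofFn v) *
              ‖runModel T s₁ ((List.ofFn v).take h.val) - M h.val s₁ ((List.ofFn v).take h.val)‖)
            = ∑ w : Fin h.val → A, seqProb T π s₁ (List.ofFn w) *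
              ‖runModel T s₁ (List.ofFn w) - M h.val s₁ (List.ofFn w)‖ :=
          fun h => sum_take T π hπ_sum h.val H (le_of_lt h.isLt) s₁
            (fun l => ‖runModel T s₁ l - M h.val s₁ l‖)
        rw [Fin.sum_univ_eq_sum_range
          (fun h => ∑ v : Fin H → A, seqProb T π s₁ (List.ofFn v) *
            ‖runModel T s₁ ((List.ofFn v).take h) - M h s₁ ((List.ofFn v).take h)‖)]
        have hsub : Finset.Ico 1 H ⊆ Finset.range H := by
          intro x hx
          rw [Finset.mem_Ico] at hx
          exact Finset.mem_range.mpr hx.2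
        have hz : ∀ x ∈ Finset.range H, x ∉ Finset.Ico 1 H →
            (∑ v : Fin H → A, seqProb T π s₁ (List.ofFn v) *
              ‖runModel T s₁ ((List.ofFn v).take x) - M x s₁ ((List.ofFn v).take x)‖) = 0 := by
          intro x hx hx'
          rw [Finset.mem_range] at hx
          rw [Finset.mem_Ico] at hx'
          have hx0 : x = 0 := by omega
          subst hx0
          refine Finset.sum_eq_zero fun v _ => ?_
          simp [runModel, hM0]
        rw [(Finset.sum_subset hsub hz).symm]
        refine Finset.sum_congr rfl fun h hh => ?_
        rw [Finset.mem_Ico] at hh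
        exact hsum ⟨h, hh.2⟩
end

section
/- Symmetrization inequality: for an i.i.d. sample z_1,...,z_n and a function class G with values in ℝ, E[ sup_{g∈G} ( E[g] − (1/n)Σ_i g(z_i) ) ] ≤ 2 · E_{z,σ}[ sup_{g∈G} (1/n) Σ_i σ_i g(z_i) ], where σ_i are i.i.d. Rademacher variables independent of the sample. -/
open Finset MeasureTheory

set_option linter.unusedSectionVars false

/-- Real-valued sign of a Boolean Rademacher variable. -/
def rsign (b : Bool) : ℝ := if b then 1 else -1

lemma rsign_abs (b : Bool) : |rsign b| = 1 := by cases b <;> simp [rsign]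

lemma rsign_not (b : Bool) : rsign (!b) = -rsign b := by cases b <;> simp [rsign]

lemma symm_avg_abs_le {n : ℕ} (hn : 0 < n) (a : Fin n → ℝ) (C : ℝ) (h : ∀ j, |a j| ≤ C) :
    |(1 / (n : ℝ)) * ∑ j, a j| ≤ C := by
  have hn' : (0:ℝ) < n := by exact_mod_cast hn
  have h1 : |∑ j, a j| ≤ (n : ℝ) * C := by
    calc |∑ j, a j| ≤ ∑ j, |a j| := Finset.abs_sum_le_sum_abs _ _
    _ ≤ ∑ _j : Fin n, C := Finset.sum_le_sum fun j _ => h j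
    _ = (n : ℝ) * C := by simp [mul_comm]
  rw [abs_mul, abs_of_nonneg (by positivity : (0:ℝ) ≤ 1 / (n:ℝ))]
  calc 1 / (n:ℝ) * |∑ j, a j| ≤ 1 / (n:ℝ) * ((n:ℝ) * C) := by
        apply mul_le_mul_of_nonneg_left h1 (by positivity)
  _ = C := by field_simp

lemma symm_bddAbove {ι : Type*} (u : ι → ℝ) (C : ℝ) (h : ∀ f, u f ≤ C) :
    BddAbove (Set.range u) := ⟨C, by rintro _ ⟨f, rfl⟩; exact h f⟩

lemma symm_abs_ciSup_le {ι : Type*} [Nonempty ι] (u : ι → ℝ) (C : ℝ) (h : ∀ f, |u f| ≤ C) :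
    |⨆ f, u f| ≤ C := by
  rw [abs_le]
  constructor
  · obtain ⟨f0⟩ := ‹Nonempty ι›
    exact le_trans (abs_le.1 (h f0)).1
      (le_ciSup (symm_bddAbove u C fun f => (abs_le.1 (h f)).2) f0)
  · exact ciSup_le fun f => (abs_le.1 (h f)).2

lemma symm_integrable_of_bound {α : Type*} [MeasurableSpace α] (P : Measure α)
    [IsFiniteMeasure P] (u : α → ℝ) (C : ℝ) (hu : Measurable u) (h : ∀ x, |u x| ≤ C) :
    Integrable u P :=
  Integrable.mono' (integrable_const C) hu.aestronglyMeasurable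
    (ae_of_all _ fun x => by rw [Real.norm_eq_abs]; exact h x)

lemma symm_map_eval {Z : Type*} [MeasurableSpace Z] (μ : Measure Z) [IsProbabilityMeasure μ]
    (n : ℕ) (j : Fin n) :
    (Measure.pi fun _ : Fin n => μ).map (fun z => z j) = μ := by
  classical
  ext s hs
  rw [Measure.map_apply (measurable_pi_apply j) hs]
  have h1 : (fun z : Fin n → Z => z j) ⁻¹' s
      = Set.pi Set.univ (Function.update (fun _ : Fin n => (Set.univ : Set Z)) j s) :=
    Set.eval_preimage
  rw [h1, Measure.pi_pi]
  rw [Fintype.prod_eq_single j (fun i hi => by simp [Function.update_of_ne hi])]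
  simp

lemma symm_mp_snd {Z : Type*} [MeasurableSpace Z] (μ : Measure Z) [IsProbabilityMeasure μ] :
    MeasurePreserving (Prod.snd : Z × Z → Z) (μ.prod μ) μ :=
  ⟨measurable_snd, by simp⟩

lemma symm_mp_fst {Z : Type*} [MeasurableSpace Z] (μ : Measure Z) [IsProbabilityMeasure μ] :
    MeasurePreserving (Prod.fst : Z × Z → Z) (μ.prod μ) μ :=
  ⟨measurable_fst, by simp⟩

section Main

variable {Z ι : Type*} [MeasurableSpace Z] [Countable ι] [Nonempty ι]
  (μ : Measure Z) [IsProbabilityMeasure μ] (n : ℕ)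
  (g : ι → Z → ℝ)

/-- Rademacher sup on a sample. -/
noncomputable def symmR (σ : Fin n → Bool) (z : Fin n → Z) : ℝ :=
  ⨆ f, (1 / (n : ℝ)) * ∑ j, rsign (σ j) * g f (z j)

/-- Rademacher sup on pairs. -/
noncomputable def symmT (σ : Fin n → Bool) (w : Fin n → Z × Z) : ℝ :=
  ⨆ f, (1 / (n : ℝ)) * ∑ j, rsign (σ j) * (g f (w j).2 - g f (w j).1)

variable {M : ℝ} (hmeas : ∀ f, Measurable (g f)) (hbdd : ∀ f z, |g f z| ≤ M) (hn : 0 < n)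

include hmeas in
lemma symmR_meas (σ : Fin n → Bool) : Measurable (symmR n g σ) :=
  Measurable.iSup fun f => Measurable.const_mul
    (Finset.univ.measurable_sum fun j _ =>
      ((hmeas f).comp (measurable_pi_apply j)).const_mul _) _

include hbdd hn in
lemma symmR_bound (σ : Fin n → Bool) (z : Fin n → Z) : |symmR n g σ z| ≤ M :=
  symm_abs_ciSup_le _ M fun f => symm_avg_abs_le hn _ M fun j => by
    rw [abs_mul, rsign_abs, one_mul]; exact hbdd f _

include hmeas in
lemma symmT_meas (σ : Fin n → Bool) : Measurable (symmT n g σ) :=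
  Measurable.iSup fun f => Measurable.const_mul
    (Finset.univ.measurable_sum fun j _ =>
      (((hmeas f).comp (measurable_snd.comp (measurable_pi_apply j))).sub
        ((hmeas f).comp (measurable_fst.comp (measurable_pi_apply j)))).const_mul _) _

include hbdd hn in
lemma symmT_bound (σ : Fin n → Bool) (w : Fin n → Z × Z) : |symmT n g σ w| ≤ 2 * M :=
  symm_abs_ciSup_le _ (2 * M) fun f => symm_avg_abs_le hn _ (2 * M) fun j => by
    rw [abs_mul, rsign_abs, one_mul, two_mul]
    exact (abs_sub _ _).trans (add_le_add (hbdd f _) (hbdd f _))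

/-- Ghost-sample sup. -/
noncomputable def symmS (p : (Fin n → Z) × (Fin n → Z)) : ℝ :=
  ⨆ f, (1 / (n : ℝ)) * ∑ j, (g f (p.2 j) - g f (p.1 j))

include hmeas in
lemma symmS_meas : Measurable (symmS n g) :=
  Measurable.iSup fun f => Measurable.const_mul
    (Finset.univ.measurable_sum fun j _ =>
      ((hmeas f).comp ((measurable_pi_apply j).comp measurable_snd)).sub
        ((hmeas f).comp ((measurable_pi_apply j).comp measurable_fst))) _

include hbdd hn in
lemma symmS_bound (p : (Fin n → Z) × (Fin n → Z)) : |symmS n g p| ≤ 2 * M :=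
  symm_abs_ciSup_le _ (2 * M) fun f => symm_avg_abs_le hn _ (2 * M) fun j => by
    rw [two_mul]
    exact (abs_sub _ _).trans (add_le_add (hbdd f _) (hbdd f _))

include hmeas hbdd hn in
lemma symm_exp_eq (f : ι) :
    ∫ w, g f w ∂μ = ∫ z, (1 / (n : ℝ)) * ∑ j, g f (z j) ∂(Measure.pi fun _ : Fin n => μ) := by
  have hint : ∀ j : Fin n, Integrable (fun z : Fin n → Z => g f (z j))
      (Measure.pi fun _ : Fin n => μ) :=
    fun j => symm_integrable_of_bound _ _ M ((hmeas f).comp (measurable_pi_apply j))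
      (fun z => hbdd f _)
  have hj : ∀ j : Fin n, (∫ z : Fin n → Z, g f (z j) ∂(Measure.pi fun _ : Fin n => μ))
      = ∫ w, g f w ∂μ := by
    intro j
    have h2 := integral_map (μ := Measure.pi fun _ : Fin n => μ) (φ := fun z => z j)
      (measurable_pi_apply j).aemeasurable (f := g f)
      (by rw [symm_map_eval μ n j]; exact (hmeas f).aestronglyMeasurable)
    rw [symm_map_eval μ n j] at h2
    exact h2.symm
  rw [MeasureTheory.integral_const_mul, integral_finset_sum _ (fun j _ => hint j)]
  simp_rw [hj]
  rw [Finset.sum_const]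
  simp only [Finset.card_univ, Fintype.card_fin, nsmul_eq_mul]
  have hn' : (n : ℝ) ≠ 0 := by exact_mod_cast hn.ne'
  field_simp

end Main

set_option maxHeartbeats 1000000 in
/-- Symmetrization inequality: for an i.i.d. sample `z_1,...,z_n ∼ μ` and a (countable)
class of functions `g : ι → Z → [−M,M]`,
`E[sup_g (E[g] − (1/n)Σ_i g(z_i))] ≤ 2·E_{z,σ}[sup_g (1/n)Σ_i σ_i g(z_i)]`,
with the Rademacher expectation written as an average over all sign patterns. -/
theorem symmetrization {Z ι : Type*} [MeasurableSpace Z] [Countable ι] [Nonempty ι]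
    (μ : Measure Z) [IsProbabilityMeasure μ] (n : ℕ) (hn : 0 < n)
    (M : ℝ) (g : ι → Z → ℝ) (hmeas : ∀ f, Measurable (g f))
    (hbdd : ∀ f z, |g f z| ≤ M) :
    (∫ z : Fin n → Z,
        ⨆ f : ι, ((∫ w, g f w ∂μ) - (1 / (n : ℝ)) * ∑ j : Fin n, g f (z j))
      ∂(Measure.pi fun _ : Fin n => μ))
    ≤ 2 * ∫ z : Fin n → Z,
        ((∑ σ : Fin n → Bool, ⨆ f : ι, (1 / (n : ℝ)) * ∑ j : Fin n, rsign (σ j) * g f (z j))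
          / 2 ^ n)
      ∂(Measure.pi fun _ : Fin n => μ) := by
  classical
  set ν : Measure (Fin n → Z) := Measure.pi fun _ : Fin n => μ with hνdef
  set π : Measure (Fin n → Z × Z) := Measure.pi fun _ : Fin n => μ.prod μ with hπdef
  haveI : IsProbabilityMeasure ν := by rw [hνdef]; infer_instance
  haveI : IsProbabilityMeasure π := by rw [hπdef]; infer_instance
  -- basic facts
  have hZ : Nonempty Z := by
    by_contra h
    rw [not_nonempty_iff] at h
    have h1 := measure_univ (μ := μ)
    rw [Set.univ_eq_empty_iff.2 h] at h1
    simp at h1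
  obtain ⟨z0⟩ := hZ
  have hM : 0 ≤ M := (abs_nonneg _).trans (hbdd (Classical.arbitrary ι) z0)
  have hEgb : ∀ f, |∫ w, g f w ∂μ| ≤ M := by
    intro f
    calc |∫ w, g f w ∂μ| ≤ ∫ w, |g f w| ∂μ := by
          simpa [Real.norm_eq_abs] using
            MeasureTheory.norm_integral_le_integral_norm (f := g f) (μ := μ)
    _ ≤ ∫ _w, M ∂μ := integral_mono
        (symm_integrable_of_bound μ _ M (hmeas f) (hbdd f)).abs (integrable_const M)
        (fun w => hbdd f w)
    _ = M := by simp
  -- integrability of the Rademacher sups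
  have intR : ∀ σ : Fin n → Bool, Integrable (symmR n g σ) ν :=
    fun σ => symm_integrable_of_bound _ _ M (symmR_meas n g hmeas σ)
      (symmR_bound n g hbdd hn σ)
  have intT : ∀ σ : Fin n → Bool, Integrable (symmT n g σ) π :=
    fun σ => symm_integrable_of_bound _ _ (2 * M) (symmT_meas n g hmeas σ)
      (symmT_bound n g hbdd hn σ)
  have intSp : Integrable (symmS n g) (ν.prod ν) :=
    symm_integrable_of_bound _ _ (2 * M) (symmS_meas n g hmeas)
      (symmS_bound n g hbdd hn)
  -- Step 1: Jensen / ghost sample, pointwise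
  have step1 : ∀ z : Fin n → Z,
      (⨆ f : ι, ((∫ w, g f w ∂μ) - (1 / (n : ℝ)) * ∑ j : Fin n, g f (z j)))
        ≤ ∫ z', symmS n g (z, z') ∂ν := by
    intro z
    apply ciSup_le
    intro f
    have hA : Integrable (fun z' : Fin n → Z => (1 / (n : ℝ)) * ∑ j : Fin n, g f (z' j)) ν :=
      symm_integrable_of_bound _ _ M
        (Measurable.const_mul (Finset.univ.measurable_sum fun j _ =>
          (hmeas f).comp (measurable_pi_apply j)) _)
        (fun z' => symm_avg_abs_le hn _ M fun j => hbdd f _)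
    have hdiffmeas : Measurable (fun z' : Fin n → Z =>
        (1 / (n : ℝ)) * ∑ j : Fin n, (g f (z' j) - g f (z j))) :=
      Measurable.const_mul (Finset.univ.measurable_sum fun j _ =>
        ((hmeas f).comp (measurable_pi_apply j)).sub measurable_const) _
    have hdiffb : ∀ z' : Fin n → Z,
        |(1 / (n : ℝ)) * ∑ j : Fin n, (g f (z' j) - g f (z j))| ≤ 2 * M := fun z' =>
      symm_avg_abs_le hn _ (2 * M) fun j => by
        rw [two_mul]; exact (abs_sub _ _).trans (add_le_add (hbdd f _) (hbdd f _))
    have e1 : (∫ w, g f w ∂μ) - (1 / (n : ℝ)) * ∑ j : Fin n, g f (z j)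
        = ∫ z', ((1 / (n : ℝ)) * ∑ j : Fin n, (g f (z' j) - g f (z j))) ∂ν := by
      have e2 : ∀ z' : Fin n → Z, (1 / (n : ℝ)) * ∑ j : Fin n, (g f (z' j) - g f (z j))
          = (1 / (n : ℝ)) * ∑ j : Fin n, g f (z' j)
            - (1 / (n : ℝ)) * ∑ j : Fin n, g f (z j) := by
        intro z'; rw [Finset.sum_sub_distrib, mul_sub]
      simp_rw [e2]
      rw [integral_sub hA (integrable_const _), integral_const]
      simp [symm_exp_eq μ n g hmeas hbdd hn f, hνdef]
    rw [e1]
    apply integral_mono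
    · exact symm_integrable_of_bound _ _ (2 * M) hdiffmeas hdiffb
    · exact symm_integrable_of_bound _ _ (2 * M)
        ((symmS_meas n g hmeas).comp measurable_prodMk_left)
        (fun z' => symmS_bound n g hbdd hn _)
    · intro z'
      have hbb : BddAbove (Set.range fun f' : ι =>
          (1 / (n : ℝ)) * ∑ j : Fin n, (g f' (z' j) - g f' (z j))) :=
        symm_bddAbove _ (2 * M) fun f' =>
          (abs_le.1 (symm_avg_abs_le hn _ (2 * M) fun j => by
            rw [two_mul]
            exact (abs_sub _ _).trans (add_le_add (hbdd f' _) (hbdd f' _)))).2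
      show (1 / (n : ℝ)) * ∑ j : Fin n, (g f (z' j) - g f (z j)) ≤ symmS n g (z, z')
      exact le_ciSup hbb f
  -- Step 2: integrate, Fubini
  have step2 : (∫ z : Fin n → Z,
      ⨆ f : ι, ((∫ w, g f w ∂μ) - (1 / (n : ℝ)) * ∑ j : Fin n, g f (z j)) ∂ν)
      ≤ ∫ p, symmS n g p ∂(ν.prod ν) := by
    have h2 : (∫ z : Fin n → Z,
        ⨆ f : ι, ((∫ w, g f w ∂μ) - (1 / (n : ℝ)) * ∑ j : Fin n, g f (z j)) ∂ν)
        ≤ ∫ z, (∫ z', symmS n g (z, z') ∂ν) ∂ν := by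
      apply integral_mono
      · exact symm_integrable_of_bound _ _ (2 * M)
          (Measurable.iSup fun f => measurable_const.sub
            (Measurable.const_mul (Finset.univ.measurable_sum fun j _ =>
              (hmeas f).comp (measurable_pi_apply j)) _))
          (fun z => symm_abs_ciSup_le _ (2 * M) fun f => by
            rw [two_mul]
            exact (abs_sub _ _).trans (add_le_add (hEgb f)
              (symm_avg_abs_le hn _ M fun j => hbdd f _)))
      · exact intSp.integral_prod_left
      · exact step1
    refine h2.trans_eq ?_
    exact MeasureTheory.integral_integral intSp
  -- Step 3: move to the pi space over pairs
  have step3 : ∫ p, symmS n g p ∂(ν.prod ν) = ∫ w, symmT n g (fun _ => true) w ∂π := by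
    rw [hνdef, hπdef]
    have hmp := measurePreserving_arrowProdEquivProdArrow Z Z (Fin n)
      (fun _ => μ) (fun _ => μ)
    have h2 := hmp.integral_comp' (symmS n g)
    rw [← h2]
    refine integral_congr_ae (ae_of_all _ fun w => ?_)
    show symmS n g (MeasurableEquiv.arrowProdEquivProdArrow Z Z (Fin n) w)
        = symmT n g (fun _ => true) w
    unfold symmS symmT
    refine iSup_congr fun f => ?_
    congr 1
    refine Finset.sum_congr rfl fun j _ => ?_
    simp [MeasurableEquiv.arrowProdEquivProdArrow, Equiv.arrowProdEquivProdArrow, rsign]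
  -- Step 4: sign-flip invariance
  have step4 : ∀ σ : Fin n → Bool,
      ∫ w, symmT n g σ w ∂π = ∫ w, symmT n g (fun _ => true) w ∂π := by
    intro σ
    have hφ : MeasurePreserving
        (fun (w : Fin n → Z × Z) (j : Fin n) => if σ j then w j else (w j).swap) π π := by
      rw [hπdef]
      apply measurePreserving_pi (fun _ : Fin n => μ.prod μ) (fun _ : Fin n => μ.prod μ)
        (f := fun j (p : Z × Z) => if σ j then p else p.swap)
      intro j
      by_cases h : σ j
      · simp only [h, ↓reduceIte]; exact MeasurePreserving.id (μ.prod μ)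
      · simpa [h] using Measure.measurePreserving_swap (μ := μ) (ν := μ)
    have hpt : ∀ w : Fin n → Z × Z,
        symmT n g (fun _ => true) (fun j => if σ j then w j else (w j).swap)
          = symmT n g σ w := by
      intro w
      unfold symmT
      refine iSup_congr fun f => ?_
      congr 1
      refine Finset.sum_congr rfl fun j _ => ?_
      by_cases h : σ j <;> simp [h, rsign]
    have h2 := integral_map (μ := π)
      (φ := fun (w : Fin n → Z × Z) (j : Fin n) => if σ j then w j else (w j).swap)
      hφ.measurable.aemeasurable (f := symmT n g (fun _ => true))
      (by rw [hφ.map_eq]; exact (symmT_meas n g hmeas _).aestronglyMeasurable)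
    rw [hφ.map_eq] at h2
    rw [h2]
    exact integral_congr_ae (ae_of_all _ fun w => (hpt w).symm)
  -- Step 5: split the sup
  have hψ2 : MeasurePreserving (fun (w : Fin n → Z × Z) (j : Fin n) => (w j).2) π ν :=
    measurePreserving_pi _ _ (fun _ => symm_mp_snd μ)
  have hψ1 : MeasurePreserving (fun (w : Fin n → Z × Z) (j : Fin n) => (w j).1) π ν :=
    measurePreserving_pi _ _ (fun _ => symm_mp_fst μ)
  have hcomp2 : ∀ σ : Fin n → Bool,
      ∫ w : Fin n → Z × Z, symmR n g σ (fun j => (w j).2) ∂π = ∫ z, symmR n g σ z ∂ν := by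
    intro σ
    have h2 := integral_map (μ := π) (φ := fun (w : Fin n → Z × Z) (j : Fin n) => (w j).2)
      hψ2.measurable.aemeasurable (f := symmR n g σ)
      (by rw [hψ2.map_eq]; exact (symmR_meas n g hmeas σ).aestronglyMeasurable)
    rw [hψ2.map_eq] at h2
    exact h2.symm
  have hcomp1 : ∀ σ : Fin n → Bool,
      ∫ w : Fin n → Z × Z, symmR n g σ (fun j => (w j).1) ∂π = ∫ z, symmR n g σ z ∂ν := by
    intro σ
    have h2 := integral_map (μ := π) (φ := fun (w : Fin n → Z × Z) (j : Fin n) => (w j).1)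
      hψ1.measurable.aemeasurable (f := symmR n g σ)
      (by rw [hψ1.map_eq]; exact (symmR_meas n g hmeas σ).aestronglyMeasurable)
    rw [hψ1.map_eq] at h2
    exact h2.symm
  have intR2 : ∀ σ : Fin n → Bool,
      Integrable (fun w : Fin n → Z × Z => symmR n g σ (fun j => (w j).2)) π :=
    fun σ => symm_integrable_of_bound _ _ M
      ((symmR_meas n g hmeas σ).comp hψ2.measurable)
      (fun w => symmR_bound n g hbdd hn σ _)
  have intR1 : ∀ σ : Fin n → Bool,
      Integrable (fun w : Fin n → Z × Z => symmR n g σ (fun j => (w j).1)) π :=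
    fun σ => symm_integrable_of_bound _ _ M
      ((symmR_meas n g hmeas σ).comp hψ1.measurable)
      (fun w => symmR_bound n g hbdd hn σ _)
  have step5 : ∀ σ : Fin n → Bool, ∫ w, symmT n g σ w ∂π
      ≤ (∫ z, symmR n g σ z ∂ν) + ∫ z, symmR n g (fun j => !σ j) z ∂ν := by
    intro σ
    have hptw : ∀ w : Fin n → Z × Z, symmT n g σ w
        ≤ symmR n g σ (fun j => (w j).2) + symmR n g (fun j => !σ j) (fun j => (w j).1) := by
      intro w
      apply ciSup_le
      intro f
      have hsplit : (1 / (n : ℝ)) * ∑ j : Fin n, rsign (σ j) * (g f (w j).2 - g f (w j).1)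
          = (1 / (n : ℝ)) * ∑ j : Fin n, rsign (σ j) * g f (w j).2
            + (1 / (n : ℝ)) * ∑ j : Fin n, rsign (!σ j) * g f (w j).1 := by
        rw [← mul_add, ← Finset.sum_add_distrib]
        congr 1
        refine Finset.sum_congr rfl fun j _ => ?_
        rw [rsign_not]; ring
      rw [hsplit]
      have bb1 : BddAbove (Set.range fun f' : ι =>
          (1 / (n : ℝ)) * ∑ j : Fin n, rsign (σ j) * g f' (w j).2) :=
        symm_bddAbove _ M fun f' =>
          (abs_le.1 (symm_avg_abs_le hn _ M fun j => by
            rw [abs_mul, rsign_abs, one_mul]; exact hbdd f' _)).2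
      have bb2 : BddAbove (Set.range fun f' : ι =>
          (1 / (n : ℝ)) * ∑ j : Fin n, rsign (!σ j) * g f' (w j).1) :=
        symm_bddAbove _ M fun f' =>
          (abs_le.1 (symm_avg_abs_le hn _ M fun j => by
            rw [abs_mul, rsign_abs, one_mul]; exact hbdd f' _)).2
      have h1 : (1 / (n : ℝ)) * ∑ j : Fin n, rsign (σ j) * g f (w j).2
          ≤ symmR n g σ (fun j => (w j).2) := le_ciSup bb1 f
      have h2 : (1 / (n : ℝ)) * ∑ j : Fin n, rsign (!σ j) * g f (w j).1
          ≤ symmR n g (fun j => !σ j) (fun j => (w j).1) := le_ciSup bb2 f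
      exact add_le_add h1 h2
    calc ∫ w, symmT n g σ w ∂π
        ≤ ∫ w : Fin n → Z × Z, (symmR n g σ (fun j => (w j).2)
            + symmR n g (fun j => !σ j) (fun j => (w j).1)) ∂π :=
          integral_mono (intT σ) ((intR2 σ).add (intR1 (fun j => !σ j))) hptw
      _ = (∫ z, symmR n g σ z ∂ν) + ∫ z, symmR n g (fun j => !σ j) z ∂ν := by
          rw [integral_add (intR2 σ) (intR1 (fun j => !σ j)), hcomp2 σ, hcomp1 (fun j => !σ j)]
  -- Step 6: reindex the complemented signs
  have step6 : (∑ σ : Fin n → Bool, ∫ z, symmR n g (fun j => !σ j) z ∂ν)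
      = ∑ σ : Fin n → Bool, ∫ z, symmR n g σ z ∂ν := by
    refine Fintype.sum_equiv ⟨fun σ j => !σ j, fun σ j => !σ j, fun σ => by funext j; simp,
      fun σ => by funext j; simp⟩ _ _ (fun σ => rfl)
  -- RHS computation
  have hRHS : (∫ z : Fin n → Z,
      ((∑ σ : Fin n → Bool, ⨆ f : ι, (1 / (n : ℝ)) * ∑ j : Fin n, rsign (σ j) * g f (z j))
        / 2 ^ n) ∂ν)
      = (∑ σ : Fin n → Bool, ∫ z, symmR n g σ z ∂ν) / 2 ^ n := by
    have hre : (fun z : Fin n → Z =>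
        ((∑ σ : Fin n → Bool, ⨆ f : ι, (1 / (n : ℝ)) * ∑ j : Fin n, rsign (σ j) * g f (z j))
          / 2 ^ n))
        = fun z => (∑ σ : Fin n → Bool, symmR n g σ z) / 2 ^ n := rfl
    rw [hre, integral_div, integral_finset_sum _ (fun σ _ => intR σ)]
  -- assemble
  rw [hRHS]
  have hcard : (Fintype.card (Fin n → Bool) : ℝ) = 2 ^ n := by
    simp [Fintype.card_fun]
  have hsum : (2 ^ n : ℝ) * ∫ w, symmT n g (fun _ => true) w ∂π
      = ∑ σ : Fin n → Bool, ∫ w, symmT n g σ w ∂π := by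
    rw [Finset.sum_congr rfl (fun σ _ => step4 σ), Finset.sum_const, Finset.card_univ,
      nsmul_eq_mul, hcard]
  have h2n : (0:ℝ) < 2 ^ n := by positivity
  calc (∫ z : Fin n → Z,
      ⨆ f : ι, ((∫ w, g f w ∂μ) - (1 / (n : ℝ)) * ∑ j : Fin n, g f (z j)) ∂ν)
      ≤ ∫ p, symmS n g p ∂(ν.prod ν) := step2
  _ = ∫ w, symmT n g (fun _ => true) w ∂π := step3
  _ = (∑ σ : Fin n → Bool, ∫ w, symmT n g σ w ∂π) / 2 ^ n := by
      rw [← hsum]; field_simp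
  _ ≤ (∑ σ : Fin n → Bool,
        ((∫ z, symmR n g σ z ∂ν) + ∫ z, symmR n g (fun j => !σ j) z ∂ν)) / 2 ^ n := by
      gcongr with σ hσ
      exact step5 σ
  _ = (2 * ∑ σ : Fin n → Bool, ∫ z, symmR n g σ z ∂ν) / 2 ^ n := by
      rw [Finset.sum_add_distrib, step6]; ring
  _ = 2 * ((∑ σ : Fin n → Bool, ∫ z, symmR n g σ z ∂ν) / 2 ^ n) := by ring
end
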